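/- Any element a₁v₁ + a₃v₃ of the KdV symmetry algebra with a₃ > 0 is adjoint-equivalent to v₃: for all real a₁ and a₃ > 0 there exist real ε₁, ε₂, ε₃, ε₄ such that (a₁, 0, a₃, 0)·A(ε₁, ε₂, ε₃, ε₄) = (0, 0, 1, 0). -/

import Mathlib

open Real Matrix

/-- separate adjoint action matrix of v₁ -/
noncomputable def A1 (e : ℝ) : Matrix (Fin 4) (Fin 4) ℝ :=
  !![1, 0, 0, 0;
     0, 1, 0, 0;
     0, 0, 1, 0;
     -e, 0, 0, 1]

/-- separate adjoint action matrix of v₂ -/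
noncomputable def A2 (e : ℝ) : Matrix (Fin 4) (Fin 4) ℝ :=
  !![1, 0, 0, 0;
     0, 1, 0, 0;
     -e, 0, 1, 0;
     0, -3 * e, 0, 1]

/-- separate adjoint action matrix of v₃ -/
noncomputable def A3 (e : ℝ) : Matrix (Fin 4) (Fin 4) ℝ :=
  !![1, 0, 0, 0;
     e, 1, 0, 0;
     0, 0, 1, 0;
     0, 0, 2 * e, 1]

/-- separate adjoint action matrix of v₄ -/
noncomputable def A4 (e : ℝ) : Matrix (Fin 4) (Fin 4) ℝ :=
  !![exp e, 0, 0, 0;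
     0, exp (3 * e), 0, 0;
     0, 0, exp (-2 * e), 0;
     0, 0, 0, 1]

/-- the general adjoint transformation matrix of the KdV symmetry algebra -/
noncomputable def A (e1 e2 e3 e4 : ℝ) : Matrix (Fin 4) (Fin 4) ℝ :=
  A1 e1 * A2 e2 * A3 e3 * A4 e4

theorem kdv_case_a3_pos (a1 a3 : ℝ) (ha3 : 0 < a3) :
    ∃ e1 e2 e3 e4 : ℝ,
      Matrix.vecMul ![a1, 0, a3, 0] (A e1 e2 e3 e4) = ![0, 0, 1, 0] := by
  refine ⟨0, a1 / a3, 0, Real.log a3 / 2, ?_⟩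
  funext i
  have h1 : a3 ≠ 0 := ne_of_gt ha3
  have h2 : Real.exp (-2 * (Real.log a3 / 2)) = 1 / a3 := by
    rw [show -2 * (Real.log a3 / 2) = -Real.log a3 by ring, Real.exp_neg, Real.exp_log ha3]
    rw [one_div]
  fin_cases i <;>
    simp [A, A1, A2, A3, A4, Matrix.vecMul, Matrix.mul_apply, Fin.sum_univ_four,
      dotProduct, Matrix.vecHead, Matrix.vecTail, Real.exp_neg, Real.exp_log ha3, h2] <;>
    field_simp <;> simp [Real.exp_log ha3]
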